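/- Let S : R^{m×n} → R^q be linear, K' ⊆ R^{m×n} with M = K' − K', and suppose N(S,1) ∩ M = {0}. Let M₀ = σ u vᵀ ∈ K' be rank one (σ > 0, ‖u‖ = ‖v‖ = 1). If for every nonzero X ∈ N(S,2) ∩ M, either u ∉ col(X) or v ∉ row(X), then M₀ is the unique matrix of minimal rank in {W ∈ K' : S(W) = S(M₀)}; i.e., any W ∈ K' with rank W ≤ 1 and S(W) = S(M₀) satisfies W = M₀. -/

import Mathlib

open Matrix BigOperators

lemma finrank_span_single_le {V : Type*} [AddCommGroup V] [Module ℝ V] (a : V) :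
    Module.finrank ℝ (Submodule.span ℝ {a}) ≤ 1 := by
  rcases eq_or_ne a 0 with h | h
  · subst h
    rw [Submodule.span_zero_singleton]
    simp
  · rw [finrank_span_singleton h]

lemma rank_smul_vecMulVec_le {m n : ℕ} (σ : ℝ) (u : Fin m → ℝ) (v : Fin n → ℝ) :
    (σ • vecMulVec u v).rank ≤ 1 := by
  have : σ • vecMulVec u v = vecMulVec (σ • u) v := by
    ext i j; simp [vecMulVec, mul_assoc]
  rw [this, vecMulVec_eq (Fin 1)]
  exact (Matrix.rank_mul_le_right _ _).trans (Matrix.rank_le_card_height _)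

lemma rank_sub_le' {m n : ℕ} (A B : Matrix (Fin m) (Fin n) ℝ) :
    (A - B).rank ≤ A.rank + B.rank := by
  unfold Matrix.rank
  have hle : LinearMap.range (A - B).mulVecLin ≤
      LinearMap.range A.mulVecLin ⊔ LinearMap.range B.mulVecLin := by
    rintro x ⟨y, rfl⟩
    have : (A - B).mulVecLin y = A.mulVecLin y - B.mulVecLin y := by
      simp [Matrix.mulVecLin_apply, Matrix.sub_mulVec]
    rw [this]
    exact Submodule.sub_mem _ (Submodule.mem_sup_left ⟨y, rfl⟩)
      (Submodule.mem_sup_right ⟨y, rfl⟩)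
  exact (Submodule.finrank_mono hle).trans
    (Submodule.finrank_add_le_finrank_add_finrank _ _)

lemma mem_col_of_rank_two {m n : ℕ} (σ : ℝ) (u : Fin m → ℝ) (v : Fin n → ℝ)
    (W : Matrix (Fin m) (Fin n) ℝ) (hW : W.rank ≤ 1)
    {X : Matrix (Fin m) (Fin n) ℝ} (hX : X = σ • vecMulVec u v - W)
    (hr : 2 ≤ X.rank) : u ∈ Set.range X.mulVec := by
  -- col W is principal
  have hprin : (LinearMap.range W.mulVecLin).IsPrincipal := by
    rw [← Submodule.rank_le_one_iff_isPrincipal]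
    rw [← Module.finrank_eq_rank]
    exact_mod_cast hW
  obtain ⟨a, ha⟩ := hprin
  set P : Submodule ℝ (Fin m → ℝ) := Submodule.span ℝ {u} ⊔ Submodule.span ℝ {a} with hP
  have hle : LinearMap.range X.mulVecLin ≤ P := by
    rintro x ⟨y, rfl⟩
    have hXy : X.mulVecLin y = (σ * (v ⬝ᵥ y)) • u - W.mulVec y := by
      subst hX
      ext i
      simp [Matrix.mulVecLin_apply, Matrix.sub_mulVec, Matrix.smul_mulVec,
        Matrix.mulVec, dotProduct, vecMulVec, Finset.mul_sum, mul_assoc, Finset.sum_sub_distrib]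
      rw [Finset.sum_mul]
      exact Finset.sum_congr rfl fun j _ => by ring
    rw [hXy]
    refine Submodule.sub_mem _ (Submodule.mem_sup_left ?_) (Submodule.mem_sup_right ?_)
    · exact Submodule.smul_mem _ _ (Submodule.mem_span_singleton_self u)
    · have : W.mulVec y ∈ LinearMap.range W.mulVecLin := ⟨y, rfl⟩
      rwa [ha] at this
  have hPfin : Module.finrank ℝ P ≤ 2 := by
    calc Module.finrank ℝ P ≤ Module.finrank ℝ (Submodule.span ℝ {u}) +
        Module.finrank ℝ (Submodule.span ℝ {a}) :=
          Submodule.finrank_add_le_finrank_add_finrank _ _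
      _ ≤ 1 + 1 := add_le_add (finrank_span_single_le u) (finrank_span_single_le a)
      _ = 2 := rfl
  have heq : LinearMap.range X.mulVecLin = P := by
    apply Submodule.eq_of_le_of_finrank_le hle
    exact hPfin.trans hr
  have hu : u ∈ P := Submodule.mem_sup_left (Submodule.mem_span_singleton_self u)
  rw [← heq] at hu
  obtain ⟨y, hy⟩ := hu
  exact ⟨y, hy⟩

theorem stmt4 (m n q : ℕ) (S : Matrix (Fin m) (Fin n) ℝ →ₗ[ℝ] (Fin q → ℝ))
    (K' : Set (Matrix (Fin m) (Fin n) ℝ))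
    (hN1 : ∀ X : Matrix (Fin m) (Fin n) ℝ,
      (∃ X₁ ∈ K', ∃ X₂ ∈ K', X = X₁ - X₂) → X.rank ≤ 1 → S X = 0 → X = 0)
    (σ : ℝ) (hσ : 0 < σ) (u : Fin m → ℝ) (v : Fin n → ℝ)
    (hu : ∑ i, u i ^ 2 = 1) (hv : ∑ j, v j ^ 2 = 1)
    (M₀ : Matrix (Fin m) (Fin n) ℝ) (hM₀ : M₀ = σ • vecMulVec u v) (hM₀K : M₀ ∈ K')
    (hcond : ∀ X : Matrix (Fin m) (Fin n) ℝ, X ≠ 0 →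
      (∃ X₁ ∈ K', ∃ X₂ ∈ K', X = X₁ - X₂) → X.rank ≤ 2 → S X = 0 →
      u ∉ Set.range X.mulVec ∨ v ∉ Set.range Xᵀ.mulVec) :
    ∀ W ∈ K', W.rank ≤ 1 → S W = S M₀ → W = M₀ := by
  intro W hWK hWr hWS
  set X := M₀ - W with hXdef
  have hmem : ∃ X₁ ∈ K', ∃ X₂ ∈ K', X = X₁ - X₂ := ⟨M₀, hM₀K, W, hWK, rfl⟩
  have hSX : S X = 0 := by
    rw [hXdef, map_sub, hWS, sub_self]
  have hr2 : X.rank ≤ 2 := by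
    calc X.rank ≤ M₀.rank + W.rank := rank_sub_le' _ _
      _ ≤ 1 + 1 := add_le_add (hM₀ ▸ rank_smul_vecMulVec_le σ u v) hWr
      _ = 2 := rfl
  by_contra hne
  have hX0 : X ≠ 0 := fun h => hne (by
    have := sub_eq_zero.mp (hXdef ▸ h)
    exact this.symm)
  have hXr : ¬ X.rank ≤ 1 := fun h => hX0 (hN1 X hmem h hSX)
  have hr : 2 ≤ X.rank := by omega
  have hucol : u ∈ Set.range X.mulVec := by
    refine mem_col_of_rank_two σ u v W hWr ?_ hr
    rw [hXdef, hM₀]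
  have hvrow : v ∈ Set.range Xᵀ.mulVec := by
    refine mem_col_of_rank_two σ v u Wᵀ ?_ ?_ ?_
    · rw [Matrix.rank_transpose]; exact hWr
    · rw [hXdef, hM₀]
      ext i j
      simp [Matrix.transpose_apply, vecMulVec, mul_comm]
    · rw [Matrix.rank_transpose]; exact hr
  rcases hcond X hX0 hmem hr2 hSX with h | h
  · exact h hucol
  · exact h hvrow
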